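/- If σ₁ = (α₁, β₁) is a splitting of G into U and σ₂ = (α₂, β₂) is a splitting of U into H, then the composition defined by α(v) = ⋃_{u ∈ α₁(v)} α₂(u) and β(e) = ⋃_{f ∈ β₁(e)} β₂(f) is a splitting of G into H. -/
import Mathlib


/-- A splitting of a graph `G` into a graph `H` (Feuilloley et al.): a pair `σ = (α, β)`
where the sets `α v` (the avatars of `v`) partition `V(H)`, and for every edge
`e = {u, v}` of `G`, `β e` is a non-empty matching between `α u` and `α v` consisting of
edges of `H`; moreover every edge of `H` arises from some edge of `G`. -/
structure Splitting {VG VH : Type} (G : SimpleGraph VG) (H : SimpleGraph VH) where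
  α : VG → Set VH
  β : Sym2 VG → Set (Sym2 VH)
  α_nonempty : ∀ v : VG, (α v).Nonempty
  α_partition : ∀ x : VH, ∃! v : VG, x ∈ α v
  β_edge : ∀ e ∈ G.edgeSet, β e ⊆ H.edgeSet
  β_nonempty : ∀ e ∈ G.edgeSet, (β e).Nonempty
  β_not_edge : ∀ e, e ∉ G.edgeSet → β e = ∅
  β_endpoints : ∀ (u v : VG) (h : G.Adj u v) (f : Sym2 VH), f ∈ β s(u, v) →
    ∃ a ∈ α u, ∃ b ∈ α v, f = s(a, b)
  β_matching : ∀ e ∈ G.edgeSet, (β e).Pairwise fun f f' => ∀ x : VH, x ∈ f → x ∉ f'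
  β_cover : ∀ f ∈ H.edgeSet, ∃ e ∈ G.edgeSet, f ∈ β e

/-- **Composition of splittings.** If `σ₁ = (α₁, β₁)` is a splitting of `G` into `U` and
`σ₂ = (α₂, β₂)` is a splitting of `U` into `H`, then the composition defined by
`α v = ⋃_{u ∈ α₁ v} α₂ u` and `β e = ⋃_{f ∈ β₁ e} β₂ f` is a splitting of `G` into `H`. -/
theorem splitting_comp {VG VU VH : Type} (G : SimpleGraph VG) (U : SimpleGraph VU)
    (H : SimpleGraph VH) (σ₁ : Splitting G U) (σ₂ : Splitting U H) :
    ∃ σ : Splitting G H,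
      (∀ v : VG, σ.α v = ⋃ u ∈ σ₁.α v, σ₂.α u) ∧
      (∀ e : Sym2 VG, σ.β e = ⋃ f ∈ σ₁.β e, σ₂.β f) := by
  -- helper: vertices of edges of σ₂.β g lie in avatars of vertices of g
  have key : ∀ (g : Sym2 VU), g ∈ U.edgeSet → ∀ f ∈ σ₂.β g, ∀ x ∈ f,
      ∃ a ∈ g, x ∈ σ₂.α a := by
    intro g
    induction g using Sym2.ind with
    | _ a b =>
      intro hg f hf x hx
      obtain ⟨p, hp, q, hq, rfl⟩ := σ₂.β_endpoints a b hg f hf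
      rcases Sym2.mem_iff.mp hx with rfl | rfl
      · exact ⟨a, Sym2.mem_mk_left a b, hp⟩
      · exact ⟨b, Sym2.mem_mk_right a b, hq⟩
  refine ⟨⟨fun v => ⋃ u ∈ σ₁.α v, σ₂.α u, fun e => ⋃ f ∈ σ₁.β e, σ₂.β f,
    ?_, ?_, ?_, ?_, ?_, ?_, ?_, ?_⟩, fun _ => rfl, fun _ => rfl⟩
  · -- α_nonempty
    intro v
    obtain ⟨u, hu⟩ := σ₁.α_nonempty v
    obtain ⟨x, hx⟩ := σ₂.α_nonempty u
    exact ⟨x, Set.mem_biUnion hu hx⟩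
  · -- α_partition
    intro x
    obtain ⟨u, hu, hu'⟩ := σ₂.α_partition x
    obtain ⟨v, hv, hv'⟩ := σ₁.α_partition u
    refine ⟨v, Set.mem_biUnion hv hu, ?_⟩
    intro v' hx'
    obtain ⟨u', hu'₁, hxu'⟩ := Set.mem_iUnion₂.mp hx'
    have := hu' u' hxu'
    subst this
    exact hv' v' hu'₁
  · -- β_edge
    intro e he f hf
    obtain ⟨g, hg, hfg⟩ := Set.mem_iUnion₂.mp hf
    exact σ₂.β_edge g (σ₁.β_edge e he hg) hfg
  · -- β_nonempty
    intro e he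
    obtain ⟨g, hg⟩ := σ₁.β_nonempty e he
    obtain ⟨f, hf⟩ := σ₂.β_nonempty g (σ₁.β_edge e he hg)
    exact ⟨f, Set.mem_biUnion hg hf⟩
  · -- β_not_edge
    intro e he
    simp [σ₁.β_not_edge e he]
  · -- β_endpoints
    intro u v h f hf
    obtain ⟨g, hg, hfg⟩ := Set.mem_iUnion₂.mp hf
    obtain ⟨a, ha, b, hb, rfl⟩ := σ₁.β_endpoints u v h g hg
    have hadj : U.Adj a b := σ₁.β_edge s(u, v) (G.mem_edgeSet.mpr h) hg
    obtain ⟨p, hp, q, hq, rfl⟩ := σ₂.β_endpoints a b hadj f hfg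
    exact ⟨p, Set.mem_biUnion ha hp, q, Set.mem_biUnion hb hq, rfl⟩
  · -- β_matching
    intro e he f hf f' hf' hne x hxf hxf'
    obtain ⟨g, hg, hfg⟩ := Set.mem_iUnion₂.mp hf
    obtain ⟨g', hg', hfg'⟩ := Set.mem_iUnion₂.mp hf'
    have hgE := σ₁.β_edge e he hg
    have hg'E := σ₁.β_edge e he hg'
    by_cases hgg : g = g'
    · subst hgg
      exact σ₂.β_matching g hgE hfg hfg' hne x hxf hxf'
    · obtain ⟨a, hag, hxa⟩ := key g hgE f hfg x hxf
      obtain ⟨a', hag', hxa'⟩ := key g' hg'E f' hfg' x hxf'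
      obtain ⟨w, _, hw⟩ := σ₂.α_partition x
      have : a = a' := (hw a hxa).trans (hw a' hxa').symm
      subst this
      exact σ₁.β_matching e he hg hg' hgg a hag hag'
  · -- β_cover
    intro f hf
    obtain ⟨g, hgE, hfg⟩ := σ₂.β_cover f hf
    obtain ⟨e, heE, hge⟩ := σ₁.β_cover g hgE
    exact ⟨e, heE, Set.mem_biUnion hge hfg⟩
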